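/- Let μ be a probability measure on ℝ₊ with distribution function F, mean 1, and μ({0}) = 0. Then the probability that two or more events of a stationary renewal process with inter-event distribution μ occur in [0,h] is o(h) as h → 0. Specifically, this probability is at most ∫₀^h F(h - y)(1 - F(y))dy ≤ h·F(h), which is o(h) since F(h) → 0 as h → 0. -/

import Mathlib

open MeasureTheory Set Filter Topology

/-- For a stationary renewal process with inter-event distribution `μ` (distribution
function `F`, mean 1, `μ {0} = 0`), the probability that two or more events occur in
`[0,h]` (i.e. that the second event time `T 1` is at most `h`) is at most
`∫₀^h F(h-y)(1-F(y)) dy ≤ h F(h)`, and is `o(h)` as `h → 0`. -/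
theorem stmt15 (Ω : Type*) [MeasurableSpace Ω] (P : Measure Ω) [IsProbabilityMeasure P]
    (μ μstar : Measure ℝ) [IsProbabilityMeasure μ]
    (hsupp : μ (Iio 0) = 0) (hatom : μ {0} = 0)
    (F : ℝ → ℝ) (hF : ∀ x, F x = (μ (Iic x)).toReal)
    (hmean : ∫ x, x ∂μ = 1)
    (hstar : μstar = volume.withDensity
      (fun y => ENNReal.ofReal (if 0 ≤ y then 1 - F y else 0)))
    (Y : ℕ → Ω → ℝ) (hmeas : ∀ m, Measurable (Y m))
    (hY0 : Measure.map (Y 0) P = μstar)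
    (hYm : ∀ m, Measure.map (Y (m + 1)) P = μ)
    (hindep : ProbabilityTheory.iIndepFun Y P)
    (T : ℕ → Ω → ℝ) (hT : ∀ m ω, T m ω = ∑ k ∈ Finset.range (m + 1), Y k ω) :
    (∀ h : ℝ, 0 ≤ h →
        P {ω | T 1 ω ≤ h} ≤ ENNReal.ofReal (∫ y in Icc 0 h, F (h - y) * (1 - F y))) ∧
      (∀ h : ℝ, 0 ≤ h →
        ENNReal.ofReal (∫ y in Icc 0 h, F (h - y) * (1 - F y)) ≤ ENNReal.ofReal (h * F h)) ∧
      Tendsto (fun h : ℝ => (P {ω | T 1 ω ≤ h}).toReal / h) (𝓝[>] 0) (𝓝 0) := by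
  -- Basic facts about F
  have hμneg : ∀ x : ℝ, x < 0 → μ (Iic x) = 0 := fun x hx =>
    measure_mono_null (fun y hy => lt_of_le_of_lt hy hx) hsupp
  have hμ0 : μ (Iic 0) = 0 := by
    have h1 : μ (Iic 0) ≤ μ (Iio 0) + μ {0} := by
      refine le_trans (measure_mono ?_) (measure_union_le _ _)
      intro y hy
      have hy' : y ≤ (0:ℝ) := hy
      rcases lt_or_eq_of_le hy' with h | h
      · exact Or.inl h
      · exact Or.inr h
    rw [hsupp, hatom] at h1
    simpa using h1
  have hFmono : Monotone F := by
    intro a b hab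
    rw [hF, hF]
    exact ENNReal.toReal_mono (measure_ne_top μ _) (measure_mono (Iic_subset_Iic.mpr hab))
  have hFmeas : Measurable F := hFmono.measurable
  have hFnonneg : ∀ x, 0 ≤ F x := fun x => by rw [hF]; exact ENNReal.toReal_nonneg
  have hFle1 : ∀ x, F x ≤ 1 := fun x => by
    rw [hF]
    have := ENNReal.toReal_mono ENNReal.one_ne_top (prob_le_one (μ := μ) (s := Iic x))
    simpa using this
  have hFneg : ∀ x : ℝ, x < 0 → F x = 0 := fun x hx => by rw [hF, hμneg x hx]; simp
  have hF0 : F 0 = 0 := by rw [hF, hμ0]; simp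
  have hμIic : ∀ t : ℝ, μ (Iic t) = ENNReal.ofReal (F t) := fun t => by
    rw [hF]; exact (ENNReal.ofReal_toReal (measure_ne_top μ _)).symm
  -- integrability
  have hmeasInt : ∀ h : ℝ, Measurable (fun y => F (h - y) * (1 - F y)) := fun h =>
    (hFmeas.comp (measurable_const.sub measurable_id)).mul
      (measurable_const.sub hFmeas)
  have hint : ∀ h : ℝ, IntegrableOn (fun y => F (h - y) * (1 - F y)) (Icc 0 h) := by
    intro h
    refine Integrable.mono' (g := fun _ => (1 : ℝ)) ?_
      ((hmeasInt h).aestronglyMeasurable.restrict) ?_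
    · exact integrableOn_const measure_Icc_lt_top.ne
    · filter_upwards with y
      rw [Real.norm_eq_abs, abs_mul, abs_of_nonneg (hFnonneg _)]
      have h1 := hFle1 (h - y)
      have h2 := hFnonneg y
      have h3 := hFle1 y
      rw [abs_of_nonneg (by linarith)]
      nlinarith
  -- the key identity
  have key : ∀ h : ℝ, 0 ≤ h →
      P {ω | T 1 ω ≤ h} = ENNReal.ofReal (∫ y in Icc 0 h, F (h - y) * (1 - F y)) := by
    intro h hh
    have hs : MeasurableSet {p : ℝ × ℝ | p.1 + p.2 ≤ h} :=
      measurableSet_le (measurable_fst.add measurable_snd) measurable_const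
    have hset : {ω | T 1 ω ≤ h} = (fun ω => (Y 0 ω, Y 1 ω)) ⁻¹' {p : ℝ × ℝ | p.1 + p.2 ≤ h} := by
      ext ω
      simp [hT, Finset.sum_range_succ]
    have hpair : Measure.map (fun ω => (Y 0 ω, Y 1 ω)) P = μstar.prod μ := by
      have hind2 := hindep.indepFun (i := 0) (j := 1) (by norm_num)
      rw [← hY0, ← hYm 0]
      exact (ProbabilityTheory.indepFun_iff_map_prod_eq_prod_map_map
        (hmeas 0).aemeasurable (hmeas 1).aemeasurable).mp hind2
    have step1 : P {ω | T 1 ω ≤ h} = (μstar.prod μ) {p : ℝ × ℝ | p.1 + p.2 ≤ h} := by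
      rw [hset, ← hpair, Measure.map_apply ((hmeas 0).prodMk (hmeas 1)) hs]
    have step2 : (μstar.prod μ) {p : ℝ × ℝ | p.1 + p.2 ≤ h}
        = ∫⁻ y, μ (Iic (h - y)) ∂μstar := by
      rw [Measure.prod_apply hs]
      congr 1
      ext y
      congr 1
      ext x
      simp [le_sub_iff_add_le']
    have hg : Measurable (fun y : ℝ => ENNReal.ofReal (if 0 ≤ y then 1 - F y else 0)) := by
      apply ENNReal.measurable_ofReal.comp
      exact Measurable.ite measurableSet_Ici (measurable_const.sub hFmeas) measurable_const
    have hf : Measurable (fun y : ℝ => μ (Iic (h - y))) := by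
      simp only [hμIic]
      exact ENNReal.measurable_ofReal.comp (hFmeas.comp (measurable_const.sub measurable_id))
    have step3 : ∫⁻ y, μ (Iic (h - y)) ∂μstar
        = ∫⁻ y, ENNReal.ofReal (if 0 ≤ y then 1 - F y else 0) * μ (Iic (h - y)) := by
      rw [hstar, lintegral_withDensity_eq_lintegral_mul _ hg hf]
      rfl
    have step4 : (fun y => ENNReal.ofReal (if 0 ≤ y then 1 - F y else 0) * μ (Iic (h - y)))
        = (Icc 0 h).indicator (fun y => ENNReal.ofReal (F (h - y) * (1 - F y))) := by
      funext y
      rcases lt_or_ge y 0 with hy | hy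
      · rw [if_neg (not_le.mpr hy), Set.indicator_of_notMem (fun hc => absurd hc.1 (not_le.mpr hy))]
        simp
      · rcases le_or_gt y h with hyh | hyh
        · rw [if_pos hy, Set.indicator_of_mem (show y ∈ Icc 0 h from ⟨hy, hyh⟩), hμIic,
            ← ENNReal.ofReal_mul (by linarith [hFle1 y]), mul_comm (1 - F y)]
        · rw [Set.indicator_of_notMem (fun hc => absurd hc.2 (not_le.mpr hyh)), hμIic,
            hFneg (h - y) (by linarith)]
          simp
    have step5 : ∫⁻ y, (Icc 0 h).indicator (fun y => ENNReal.ofReal (F (h - y) * (1 - F y))) y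
        = ∫⁻ y in Icc 0 h, ENNReal.ofReal (F (h - y) * (1 - F y)) := by
      rw [lintegral_indicator measurableSet_Icc _]
    have step6 : ENNReal.ofReal (∫ y in Icc 0 h, F (h - y) * (1 - F y))
        = ∫⁻ y in Icc 0 h, ENNReal.ofReal (F (h - y) * (1 - F y)) := by
      refine ofReal_integral_eq_lintegral_ofReal (hint h) ?_
      filter_upwards with y
      exact mul_nonneg (hFnonneg _) (by linarith [hFle1 y])
    rw [step1, step2, step3, step6, ← step5, step4]
  -- part 2 bound
  have part2 : ∀ h : ℝ, 0 ≤ h →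
      ENNReal.ofReal (∫ y in Icc 0 h, F (h - y) * (1 - F y)) ≤ ENNReal.ofReal (h * F h) := by
    intro h hh
    apply ENNReal.ofReal_le_ofReal
    have hb : ∀ y ∈ Icc (0:ℝ) h, F (h - y) * (1 - F y) ≤ F h := by
      intro y hy
      have h1 : F (h - y) ≤ F h := hFmono (by linarith [hy.1])
      have h2 := hFnonneg y
      have h3 := hFle1 y
      have h4 := hFnonneg (h - y)
      nlinarith
    calc ∫ y in Icc 0 h, F (h - y) * (1 - F y) ≤ ∫ _y in Icc 0 h, F h := by
          refine setIntegral_mono_on (hint h) ?_ measurableSet_Icc hb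
          exact integrableOn_const measure_Icc_lt_top.ne
      _ = (volume (Icc 0 h)).toReal * F h := by rw [setIntegral_const, smul_eq_mul, measureReal_def]
      _ = h * F h := by rw [Real.volume_Icc, ENNReal.toReal_ofReal (by linarith)]; ring_nf
  refine ⟨fun h hh => le_of_eq (key h hh), part2, ?_⟩
  -- part 3: o(h)
  have hFtendsto : Tendsto F (𝓝[>] (0:ℝ)) (𝓝 0) := by
    have hcdf : F = fun x => ProbabilityTheory.cdf μ x := by
      funext x; rw [hF, ProbabilityTheory.cdf_eq_real, measureReal_def]
    have h1 := ((ProbabilityTheory.cdf μ).right_continuous 0).tendsto.mono_left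
      (nhdsWithin_mono 0 Ioi_subset_Ici_self)
    have h2 : ProbabilityTheory.cdf μ 0 = 0 := by
      rw [ProbabilityTheory.cdf_eq_real, measureReal_def, hμ0]; simp
    rw [hcdf]
    rw [h2] at h1
    exact h1
  apply squeeze_zero' ?_ ?_ hFtendsto
  · filter_upwards [self_mem_nhdsWithin] with h hh
    exact div_nonneg ENNReal.toReal_nonneg (le_of_lt hh)
  · filter_upwards [self_mem_nhdsWithin] with h hh
    have hle : P {ω | T 1 ω ≤ h} ≤ ENNReal.ofReal (h * F h) :=
      le_trans (le_of_eq (key h (le_of_lt hh))) (part2 h (le_of_lt hh))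
    have htR : (P {ω | T 1 ω ≤ h}).toReal ≤ h * F h := by
      calc (P {ω | T 1 ω ≤ h}).toReal ≤ (ENNReal.ofReal (h * F h)).toReal :=
            ENNReal.toReal_mono ENNReal.ofReal_ne_top hle
        _ = h * F h := ENNReal.toReal_ofReal (mul_nonneg (le_of_lt hh) (hFnonneg h))
    rw [div_le_iff₀ hh]
    linarith
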